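/- (Self-adjointness on (a,b).) Let a, b ∈ I with a ≤ s0 ≤ b, let r : I → ℝ be continuous on [a,b], and let a1, a2, b1, b2 be real numbers with |a1| + |a2| ≠ 0 and |b1| + |b2| ≠ 0. Let y, z : I → ℂ belong to L²_β(a,b), be continuous and differentiable at s0, with D_β y and D_β z differentiable at s0 and D_β y, D_β z, D_{β^{-1}}D_β y, D_{β^{-1}}D_β z bounded on {β^k(a), β^k(b) : k ∈ ℕ₀} ∪ {s0}, and suppose both y and z satisfy the boundary conditions a1·w(a) + a2·(D_{β^{-1}}w)(a) = 0 and b1·w(b) + b2·(D_{β^{-1}}w)(b) = 0. Then ⟨ℓ_β y, z⟩ = ⟨y, ℓ_β z⟩, the inner products being taken over (a,b). -/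

import Mathlib

open Function Set ComplexConjugate Filter Topology

/-- The β-derivative `D_β f` of `f : ℝ → ℂ`:
`(f (β t) - f t) / (β t - t)` for `t ≠ s0`, and `f' s0` at `t = s0`. -/
noncomputable def Dq (β : ℝ → ℝ) (s0 : ℝ) (f : ℝ → ℂ) (t : ℝ) : ℂ :=
  if t = s0 then deriv f s0 else (f (β t) - f t) / ((β t : ℂ) - (t : ℂ))

/-- The β-integral `∫_{s0}^{x} f d_β = ∑_{k} (β^k x - β^{k+1} x) f (β^k x)` (complex-valued). -/
noncomputable def betaInt (β : ℝ → ℝ) (x : ℝ) (f : ℝ → ℂ) : ℂ :=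
  ∑' k : ℕ, ((β^[k] x - β^[k + 1] x : ℝ) : ℂ) * f (β^[k] x)

/-- The β-integral `∫_{s0}^{x} f d_β` for a real-valued integrand. -/
noncomputable def betaIntR (β : ℝ → ℝ) (x : ℝ) (f : ℝ → ℝ) : ℝ :=
  ∑' k : ℕ, (β^[k] x - β^[k + 1] x) * f (β^[k] x)

/-- `∫_a^b f d_β := ∫_{s0}^b f d_β - ∫_{s0}^a f d_β`. -/
noncomputable def betaIntAB (β : ℝ → ℝ) (a b : ℝ) (f : ℝ → ℂ) : ℂ :=
  betaInt β b f - betaInt β a f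

/-- `∫_a^b f d_β` for a real-valued integrand. -/
noncomputable def betaIntRAB (β : ℝ → ℝ) (a b : ℝ) (f : ℝ → ℝ) : ℝ :=
  betaIntR β b f - betaIntR β a f

/-- `D_β β⁻¹`, viewed as a complex-valued function. -/
noncomputable def DbinvC (β βinv : ℝ → ℝ) (s0 : ℝ) : ℝ → ℂ :=
  Dq β s0 fun u => (βinv u : ℂ)

/-- The β-Sturm–Liouville operator
`ℓ_β y (t) = -(D_β β⁻¹)(t) · (D_{β⁻¹} (D_β y))(t) + r t · y t`. -/
noncomputable def ellBeta (β βinv : ℝ → ℝ) (s0 : ℝ) (r : ℝ → ℝ) (y : ℝ → ℂ) (t : ℝ) : ℂ :=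
  -(DbinvC β βinv s0 t) * Dq βinv s0 (Dq β s0 y) t + (r t : ℂ) * y t

/-- The β-Wronskian `[y,z](t) = y t · (D_{β⁻¹} z) t - z t · (D_{β⁻¹} y) t`. -/
noncomputable def wronk (βinv : ℝ → ℝ) (s0 : ℝ) (y z : ℝ → ℂ) (t : ℝ) : ℂ :=
  y t * Dq βinv s0 z t - z t * Dq βinv s0 y t

/-- The β-exponential `e_{p,β}(t) = 1 / ∏_k (1 - p(β^k t)(β^k t - β^{k+1} t))`. -/
noncomputable def ebeta (β : ℝ → ℝ) (p : ℝ → ℂ) (t : ℝ) : ℂ :=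
  1 / ∏' k : ℕ, (1 - p (β^[k] t) * ((β^[k] t - β^[k + 1] t : ℝ) : ℂ))

/-- The β-exponential `E_{p,β}(t) = ∏_k (1 + p(β^k t)(β^k t - β^{k+1} t))`. -/
noncomputable def Ebeta (β : ℝ → ℝ) (p : ℝ → ℂ) (t : ℝ) : ℂ :=
  ∏' k : ℕ, (1 + p (β^[k] t) * ((β^[k] t - β^[k + 1] t : ℝ) : ℂ))

/-- `sin_{p,β}(t) = (e_{ip,β}(t) - e_{-ip,β}(t)) / (2i)`. -/
noncomputable def sinBeta (β : ℝ → ℝ) (p : ℝ → ℂ) (t : ℝ) : ℂ :=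
  (ebeta β (fun s => Complex.I * p s) t - ebeta β (fun s => -(Complex.I * p s)) t) /
    (2 * Complex.I)

/-- `cos_{p,β}(t) = (e_{ip,β}(t) + e_{-ip,β}(t)) / 2`. -/
noncomputable def cosBeta (β : ℝ → ℝ) (p : ℝ → ℂ) (t : ℝ) : ℂ :=
  (ebeta β (fun s => Complex.I * p s) t + ebeta β (fun s => -(Complex.I * p s)) t) / 2

section Aux

variable {I : Set ℝ} {β βinv : ℝ → ℝ} {s0 : ℝ}

lemma orbit_mem (hbij : Set.BijOn β I I) {x : ℝ} (hx : x ∈ I) (k : ℕ) : β^[k] x ∈ I := by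
  induction k with
  | zero => simpa using hx
  | succ n ih => rw [Function.iterate_succ_apply']; exact hbij.mapsTo ih

lemma orbit_ne (hbij : Set.BijOn β I I) (hs0I : s0 ∈ I) (hfix : β s0 = s0)
    {x : ℝ} (hx : x ∈ I) (hxne : x ≠ s0) (k : ℕ) : β^[k] x ≠ s0 := by
  induction k with
  | zero => simpa using hxne
  | succ n ih =>
    rw [Function.iterate_succ_apply']
    intro h
    exact ih (hbij.injOn (orbit_mem hbij hx n) hs0I (by rw [h, hfix]))

lemma step_ge (hmono : StrictMonoOn β I) (hs0I : s0 ∈ I) (hfix : β s0 = s0)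
    (hsign : ∀ t ∈ I, (t - s0) * (β t - t) ≤ 0)
    {t : ℝ} (ht : t ∈ I) (h : s0 ≤ t) : s0 ≤ β t ∧ β t ≤ t := by
  constructor
  · have := hmono.monotoneOn hs0I ht h
    rwa [hfix] at this
  · rcases eq_or_lt_of_le h with h' | h'
    · rw [← h', hfix]
    · have := hsign t ht
      nlinarith

lemma step_le (hmono : StrictMonoOn β I) (hs0I : s0 ∈ I) (hfix : β s0 = s0)
    (hsign : ∀ t ∈ I, (t - s0) * (β t - t) ≤ 0)
    {t : ℝ} (ht : t ∈ I) (h : t ≤ s0) : t ≤ β t ∧ β t ≤ s0 := by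
  constructor
  · rcases eq_or_lt_of_le h with h' | h'
    · rw [h', hfix]
    · have := hsign t ht
      nlinarith
  · have := hmono.monotoneOn ht hs0I h
    rwa [hfix] at this

/-- orbit stays in `uIcc`-like bounds: case `s0 ≤ x`. -/
lemma orbit_bounds_ge (hmono : StrictMonoOn β I) (hbij : Set.BijOn β I I)
    (hs0I : s0 ∈ I) (hfix : β s0 = s0)
    (hsign : ∀ t ∈ I, (t - s0) * (β t - t) ≤ 0)
    {x : ℝ} (hx : x ∈ I) (h : s0 ≤ x) (k : ℕ) :
    s0 ≤ β^[k] x ∧ β^[k] x ≤ x := by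
  induction k with
  | zero => simp only [Function.iterate_zero_apply]; exact ⟨h, le_rfl⟩
  | succ n ih =>
    rw [Function.iterate_succ_apply']
    have h1 := step_ge hmono hs0I hfix hsign (orbit_mem hbij hx n) ih.1
    exact ⟨h1.1, le_trans h1.2 ih.2⟩

lemma orbit_bounds_le (hmono : StrictMonoOn β I) (hbij : Set.BijOn β I I)
    (hs0I : s0 ∈ I) (hfix : β s0 = s0)
    (hsign : ∀ t ∈ I, (t - s0) * (β t - t) ≤ 0)
    {x : ℝ} (hx : x ∈ I) (h : x ≤ s0) (k : ℕ) :
    x ≤ β^[k] x ∧ β^[k] x ≤ s0 := by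
  induction k with
  | zero => simp only [Function.iterate_zero_apply]; exact ⟨le_rfl, h⟩
  | succ n ih =>
    rw [Function.iterate_succ_apply']
    have h1 := step_le hmono hs0I hfix hsign (orbit_mem hbij hx n) ih.2
    exact ⟨le_trans ih.1 h1.1, h1.2⟩

lemma orbit_tendsto (hIconn : I.OrdConnected)
    (hmono : StrictMonoOn β I) (hcont : ContinuousOn β I) (hbij : Set.BijOn β I I)
    (hs0I : s0 ∈ I) (hfix : β s0 = s0)
    (hsign : ∀ t ∈ I, (t - s0) * (β t - t) ≤ 0)
    (huniq : ∀ t ∈ I, (t - s0) * (β t - t) = 0 → t = s0)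
    {x : ℝ} (hx : x ∈ I) :
    Tendsto (fun k => β^[k] x) atTop (𝓝 s0) := by
  set u : ℕ → ℝ := fun k => β^[k] x with hu
  have humem : ∀ k, u k ∈ I := orbit_mem hbij hx
  have husucc : ∀ k, u (k + 1) = β (u k) := fun k => Function.iterate_succ_apply' β k x
  have key : ∀ (L : ℝ), L ∈ I → Tendsto u atTop (𝓝 L) → L = s0 := by
    intro L hLI hten
    have h1 : Tendsto u atTop (𝓝[I] L) :=
      tendsto_nhdsWithin_of_tendsto_nhds_of_eventually_within u hten
        (Filter.Eventually.of_forall humem)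
    have h2 : Tendsto (fun k => β (u k)) atTop (𝓝 (β L)) :=
      ((hcont L hLI).tendsto).comp h1
    have h3 : Tendsto (fun k => u (k + 1)) atTop (𝓝 L) :=
      hten.comp (tendsto_add_atTop_nat 1)
    have h4 : Tendsto (fun k => u (k + 1)) atTop (𝓝 (β L)) := by
      simpa [husucc] using h2
    have hβL : β L = L := tendsto_nhds_unique h4 h3
    exact huniq L hLI (by rw [hβL]; ring)
  rcases le_total s0 x with h | h
  · have hb := orbit_bounds_ge hmono hbij hs0I hfix hsign hx h
    have hanti : Antitone u := antitone_nat_of_succ_le fun k => by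
      rw [husucc]
      exact (step_ge hmono hs0I hfix hsign (humem k) (hb k).1).2
    have hbdd : BddBelow (Set.range u) := ⟨s0, by rintro _ ⟨k, rfl⟩; exact (hb k).1⟩
    have hten := tendsto_atTop_ciInf hanti hbdd
    have hLI : (⨅ i, u i) ∈ I := by
      apply hIconn.out hs0I hx
      constructor
      · exact le_ciInf fun k => (hb k).1
      · exact ciInf_le_of_le hbdd 0 (le_of_eq (by simp [hu]))
    rw [key _ hLI hten] at hten
    exact hten
  · have hb := orbit_bounds_le hmono hbij hs0I hfix hsign hx h
    have hmonou : Monotone u := monotone_nat_of_le_succ fun k => by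
      rw [husucc]
      exact (step_le hmono hs0I hfix hsign (humem k) (hb k).2).1
    have hbdd : BddAbove (Set.range u) := ⟨s0, by rintro _ ⟨k, rfl⟩; exact (hb k).2⟩
    have hten := tendsto_atTop_ciSup hmonou hbdd
    have hLI : (⨆ i, u i) ∈ I := by
      apply hIconn.out hx hs0I
      constructor
      · exact le_ciSup_of_le hbdd 0 (le_of_eq (by simp [hu]))
      · exact ciSup_le fun k => (hb k).2
    rw [key _ hLI hten] at hten
    exact hten

lemma summable_diff (hmono : StrictMonoOn β I) (hbij : Set.BijOn β I I)
    (hs0I : s0 ∈ I) (hfix : β s0 = s0)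
    (hsign : ∀ t ∈ I, (t - s0) * (β t - t) ≤ 0)
    {x : ℝ} (hx : x ∈ I) :
    Summable (fun k : ℕ => |β^[k] x - β^[k + 1] x|) := by
  set u : ℕ → ℝ := fun k => β^[k] x with hu
  rcases le_total s0 x with h | h
  · have hb := orbit_bounds_ge hmono hbij hs0I hfix hsign hx h
    have hstep : ∀ k, u (k + 1) ≤ u k := fun k => by
      show β^[k+1] x ≤ β^[k] x
      rw [Function.iterate_succ_apply']
      exact (step_ge hmono hs0I hfix hsign (orbit_mem hbij hx k) (hb k).1).2
    have habs : ∀ k, |u k - u (k + 1)| = u k - u (k + 1) := fun k =>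
      abs_of_nonneg (by linarith [hstep k])
    apply summable_of_sum_range_le (c := x - s0) (fun k => by rw [habs k]; linarith [hstep k])
    intro n
    calc ∑ i ∈ Finset.range n, |u i - u (i + 1)|
        = ∑ i ∈ Finset.range n, (u i - u (i + 1)) := Finset.sum_congr rfl fun i _ => habs i
      _ = u 0 - u n := Finset.sum_range_sub' u n
      _ ≤ x - s0 := by
          have h1 : u 0 = x := by simp [hu]
          have := (hb n).1
          simp only [h1]
          linarith
  · have hb := orbit_bounds_le hmono hbij hs0I hfix hsign hx h
    have hstep : ∀ k, u k ≤ u (k + 1) := fun k => by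
      show β^[k] x ≤ β^[k+1] x
      rw [Function.iterate_succ_apply']
      exact (step_le hmono hs0I hfix hsign (orbit_mem hbij hx k) (hb k).2).1
    have habs : ∀ k, |u k - u (k + 1)| = u (k + 1) - u k := fun k =>
      abs_sub_comm (u k) (u (k+1)) ▸ abs_of_nonneg (by linarith [hstep k])
    apply summable_of_sum_range_le (c := s0 - x) (fun k => by rw [habs k]; linarith [hstep k])
    intro n
    calc ∑ i ∈ Finset.range n, |u i - u (i + 1)|
        = ∑ i ∈ Finset.range n, (u (i + 1) - u i) := Finset.sum_congr rfl fun i _ => habs i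
      _ = -(u 0 - u n) := by rw [← Finset.sum_range_sub' u n]; simp [Finset.sum_neg_distrib]
      _ ≤ s0 - x := by
          have h1 : u 0 = x := by simp [hu]
          have := (hb n).2
          simp only [h1]
          linarith

end Aux

section Alg
variable {β βinv : ℝ → ℝ} {s0 : ℝ}

/-- conj commutes with Dq at points where it is a difference quotient. -/
lemma Dq_conj_ne (γ : ℝ → ℝ) (f : ℝ → ℂ) {t : ℝ} (ht : t ≠ s0) :
    Dq γ s0 (fun s => conj (f s)) t = conj (Dq γ s0 f t) := by
  simp only [Dq, if_neg ht, map_div₀, map_sub, Complex.conj_ofReal]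

lemma Dq_conj (γ : ℝ → ℝ) (f : ℝ → ℂ) (hf : DifferentiableAt ℝ f s0) (t : ℝ) :
    Dq γ s0 (fun s => conj (f s)) t = conj (Dq γ s0 f t) := by
  rcases eq_or_ne t s0 with rfl | ht
  · simp only [Dq, if_pos rfl]
    have h1 : HasDerivAt (fun s => conj (f s)) (conj (deriv f t)) t := by
      have := (Complex.conjCLE.hasFDerivAt (x := f t)).comp_hasDerivAt t hf.hasDerivAt
      exact this
    rw [h1.deriv]
    simp
  · exact Dq_conj_ne γ f ht

/-- the double Dq commutes with conj away from s0. -/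
lemma DDq_conj (f : ℝ → ℂ) {t : ℝ} (ht : t ≠ s0) (hpt : βinv t ≠ s0) :
    Dq βinv s0 (Dq β s0 (fun s => conj (f s))) t =
      conj (Dq βinv s0 (Dq β s0 f) t) := by
  simp only [Dq, if_neg ht, if_neg hpt, map_div₀, map_sub, Complex.conj_ofReal]

/-- conj of ellBeta away from s0. -/
lemma conj_ellBeta (r : ℝ → ℝ) (z : ℝ → ℂ) {t : ℝ} (ht : t ≠ s0) (hpt : βinv t ≠ s0) :
    conj (ellBeta β βinv s0 r z t) = ellBeta β βinv s0 r (fun s => conj (z s)) t := by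
  simp only [ellBeta, map_add, map_mul, map_neg, Complex.conj_ofReal,
    DDq_conj (β := β) z ht hpt]
  congr 2
  simp only [DbinvC, Dq, if_neg ht, map_div₀, map_sub, Complex.conj_ofReal]

/-- Dq with βinv at β t equals Dq with β at t. -/
lemma Dq_binv_beta (g : ℝ → ℂ) {t : ℝ} (ht : t ≠ s0) (hbt : β t ≠ s0)
    (hlinv : βinv (β t) = t) :
    Dq βinv s0 g (β t) = Dq β s0 g t := by
  simp only [Dq, if_neg ht, if_neg hbt, hlinv]
  rw [← neg_div_neg_eq]
  ring_nf

/-- the key pointwise Lagrange identity. -/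
lemma key_identity (r : ℝ → ℝ) (y Z : ℝ → ℂ) {t : ℝ} (ht : t ≠ s0) (hbt : β t ≠ s0)
    (hpt : βinv t ≠ s0) (hβne : β t ≠ t) (hpne : βinv t ≠ t)
    (hlinv : βinv (β t) = t) (hrinv : β (βinv t) = t) :
    ((t - β t : ℝ) : ℂ) *
        (ellBeta β βinv s0 r y t * Z t - y t * ellBeta β βinv s0 r Z t) =
      wronk βinv s0 y Z t - wronk βinv s0 y Z (β t) := by
  have h1 : (β t : ℂ) - t ≠ 0 := sub_ne_zero.mpr (by exact_mod_cast hβne)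
  have h2 : (βinv t : ℂ) - t ≠ 0 := sub_ne_zero.mpr (by exact_mod_cast hpne)
  have h2' : (t : ℂ) - βinv t ≠ 0 := sub_ne_zero.mpr (by exact_mod_cast (Ne.symm hpne))
  have h3 : (t : ℂ) - β t ≠ 0 := sub_ne_zero.mpr (by exact_mod_cast (Ne.symm hβne))
  have eDb : DbinvC β βinv s0 t = ((t : ℂ) - βinv t) / ((β t : ℂ) - t) := by
    rw [DbinvC, Dq, if_neg ht, hlinv]
  have eDyt : ∀ f : ℝ → ℂ, Dq β s0 f t = (f (β t) - f t) / ((β t : ℂ) - t) := fun f => by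
    rw [Dq, if_neg ht]
  have eDyp : ∀ f : ℝ → ℂ, Dq β s0 f (βinv t) = (f t - f (βinv t)) / ((t : ℂ) - βinv t) :=
    fun f => by rw [Dq, if_neg hpt, hrinv]
  have eDD : ∀ f : ℝ → ℂ, Dq βinv s0 (Dq β s0 f) t =
      ((f t - f (βinv t)) / ((t : ℂ) - βinv t) - (f (β t) - f t) / ((β t : ℂ) - t)) /
        ((βinv t : ℂ) - t) := fun f => by
    rw [Dq, if_neg ht, eDyp, eDyt]
  have eW1 : ∀ f : ℝ → ℂ, Dq βinv s0 f t = (f (βinv t) - f t) / ((βinv t : ℂ) - t) :=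
    fun f => by rw [Dq, if_neg ht]
  have eW2 : ∀ f : ℝ → ℂ, Dq βinv s0 f (β t) = (f t - f (β t)) / ((t : ℂ) - β t) :=
    fun f => by rw [Dq, if_neg hbt, hlinv]
  simp only [ellBeta, wronk, eDb, eDD, eW1, eW2]
  push_cast
  field_simp
  ring

/-- decomposition of the integrand term, for summability. -/
lemma term_decomp (r : ℝ → ℝ) (y Z : ℝ → ℂ) {t : ℝ} (ht : t ≠ s0) (hβne : β t ≠ t)
    (hlinv : βinv (β t) = t) :
    ((t - β t : ℝ) : ℂ) * (ellBeta β βinv s0 r y t * Z t) =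
      ((t - βinv t : ℝ) : ℂ) * Dq βinv s0 (Dq β s0 y) t * Z t +
        ((t - β t : ℝ) : ℂ) * r t * (y t * Z t) := by
  have h1 : (β t : ℂ) - t ≠ 0 := sub_ne_zero.mpr (by exact_mod_cast hβne)
  have eDb : DbinvC β βinv s0 t = ((t : ℂ) - βinv t) / ((β t : ℂ) - t) := by
    rw [DbinvC, Dq, if_neg ht, hlinv]
  rw [ellBeta, eDb]
  generalize Dq βinv s0 (Dq β s0 y) t = D
  push_cast
  field_simp
  ring

/-- Wronskian vanishes under the boundary condition. -/
lemma wronk_eq_zero (y Z : ℝ → ℂ) (c1 c2 : ℝ) (hc : ¬ (c1 = 0 ∧ c2 = 0)) {t : ℝ}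
    (h1 : (c1 : ℂ) * y t + (c2 : ℂ) * Dq βinv s0 y t = 0)
    (h2 : (c1 : ℂ) * Z t + (c2 : ℂ) * Dq βinv s0 Z t = 0) :
    wronk βinv s0 y Z t = 0 := by
  rcases not_and_or.mp hc with hc1 | hc2
  · have hcc : (c1 : ℂ) ≠ 0 := by exact_mod_cast hc1
    have e1 : (c1 : ℂ) * y t = -((c2 : ℂ) * Dq βinv s0 y t) := by linear_combination h1
    have e2 : (c1 : ℂ) * Z t = -((c2 : ℂ) * Dq βinv s0 Z t) := by linear_combination h2
    have : (c1 : ℂ) * wronk βinv s0 y Z t = 0 := by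
      simp only [wronk]
      linear_combination Dq βinv s0 Z t * e1 - Dq βinv s0 y t * e2
    exact (mul_eq_zero.mp this).resolve_left hcc
  · have hcc : (c2 : ℂ) ≠ 0 := by exact_mod_cast hc2
    have e1 : (c2 : ℂ) * Dq βinv s0 y t = -((c1 : ℂ) * y t) := by linear_combination h1
    have e2 : (c2 : ℂ) * Dq βinv s0 Z t = -((c1 : ℂ) * Z t) := by linear_combination h2
    have : (c2 : ℂ) * wronk βinv s0 y Z t = 0 := by
      simp only [wronk]
      linear_combination y t * e2 - Z t * e1
    exact (mul_eq_zero.mp this).resolve_left hcc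

end Alg

section End
variable {I : Set ℝ} {β βinv : ℝ → ℝ} {s0 : ℝ}

/-- The main endpoint computation. -/
lemma endpoint (hIconn : I.OrdConnected)
    (hmono : StrictMonoOn β I) (hcont : ContinuousOn β I)
    (hbij : Set.BijOn β I I) (hinv : Set.InvOn βinv β I I)
    (hs0I : s0 ∈ I) (hfix : β s0 = s0)
    (hsign : ∀ t ∈ I, (t - s0) * (β t - t) ≤ 0)
    (huniq : ∀ t ∈ I, (t - s0) * (β t - t) = 0 → t = s0)
    (a b : ℝ) (has0 : a ≤ s0) (hs0b : s0 ≤ b)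
    (r : ℝ → ℝ) (hr : ContinuousOn r (Set.Icc a b))
    (y z : ℝ → ℂ)
    (hyc : ContinuousAt y s0) (hzc : ContinuousAt z s0)
    (hyd : DifferentiableAt ℝ y s0) (hzd : DifferentiableAt ℝ z s0)
    (hDyd : DifferentiableAt ℝ (Dq β s0 y) s0) (hDzd : DifferentiableAt ℝ (Dq β s0 z) s0)
    (x : ℝ) (hxI : x ∈ I) (hax : a ≤ x) (hxb : x ≤ b)
    (CDy CDz : ℝ)
    (hCDy : ∀ k : ℕ, ‖Dq βinv s0 (Dq β s0 y) (β^[k] x)‖ ≤ CDy)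
    (hCDz : ∀ k : ℕ, ‖Dq βinv s0 (Dq β s0 z) (β^[k] x)‖ ≤ CDz) :
    betaInt β x (fun t => ellBeta β βinv s0 r y t * conj (z t)) -
        betaInt β x (fun t => y t * conj (ellBeta β βinv s0 r z t)) =
      wronk βinv s0 y (fun s => conj (z s)) x -
        wronk βinv s0 y (fun s => conj (z s)) s0 := by
  set Z : ℝ → ℂ := fun s => conj (z s) with hZdef
  set W : ℝ → ℂ := wronk βinv s0 y Z with hWdef
  set u : ℕ → ℝ := fun k => β^[k] x with hudef
  rcases eq_or_ne x s0 with rfl | hxne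
  · -- trivial case x = s0
    have hfixk : ∀ k : ℕ, β^[k] x = x := fun k => Function.iterate_fixed hfix k
    have h0 : ∀ f : ℝ → ℂ, betaInt β x f = 0 := by
      intro f
      simp [betaInt, hfixk]
    rw [h0, h0, sub_self, sub_self]
  -- main case
  have humem : ∀ k, u k ∈ I := orbit_mem hbij hxI
  have hne : ∀ k, u k ≠ s0 := orbit_ne hbij hs0I hfix hxI hxne
  have husucc : ∀ k, u (k + 1) = β (u k) := fun k => Function.iterate_succ_apply' β k x
  have hlinv : ∀ k, βinv (β (u k)) = u k := fun k => hinv.1 (humem k)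
  have hrinv : ∀ k, β (βinv (u k)) = u k := fun k => hinv.2 (humem k)
  have hβne : ∀ k, β (u k) ≠ u k := by
    intro k h
    exact hne k (huniq (u k) (humem k) (by rw [h]; ring))
  have hbt : ∀ k, β (u k) ≠ s0 := fun k => (husucc k) ▸ hne (k + 1)
  have hpne : ∀ k, βinv (u k) ≠ u k := by
    intro k h
    apply hβne k
    conv_rhs => rw [← hrinv k, h]
  have hpt : ∀ k, βinv (u k) ≠ s0 := by
    intro k h
    apply hne k
    rw [← hrinv k, h, hfix]
  -- bounds
  have hu_t : Tendsto u atTop (𝓝 s0) :=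
    orbit_tendsto hIconn hmono hcont hbij hs0I hfix hsign huniq hxI
  obtain ⟨Cy, hCy⟩ : ∃ C, ∀ k, ‖y (u k)‖ ≤ C := by
    obtain ⟨C, hC⟩ := ((hyc.tendsto.comp hu_t).norm).bddAbove_range
    exact ⟨C, fun k => hC ⟨k, rfl⟩⟩
  obtain ⟨Cz, hCz⟩ : ∃ C, ∀ k, ‖z (u k)‖ ≤ C := by
    obtain ⟨C, hC⟩ := ((hzc.tendsto.comp hu_t).norm).bddAbove_range
    exact ⟨C, fun k => hC ⟨k, rfl⟩⟩
  have hZn : ∀ k, ‖Z (u k)‖ ≤ Cz := fun k => by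
    simpa [hZdef] using hCz k
  obtain ⟨R, hRR⟩ := IsCompact.exists_bound_of_continuousOn isCompact_Icc hr
  have hmem_ab : ∀ k, u k ∈ Set.Icc a b := by
    intro k
    rcases le_total s0 x with h | h
    · have := orbit_bounds_ge hmono hbij hs0I hfix hsign hxI h k
      exact ⟨le_trans has0 this.1, le_trans this.2 hxb⟩
    · have := orbit_bounds_le hmono hbij hs0I hfix hsign hxI h k
      exact ⟨le_trans hax this.1, le_trans this.2 hs0b⟩
  have hRn : ∀ k, ‖r (u k)‖ ≤ R := fun k => hRR _ (hmem_ab k)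
  have hCDZ : ∀ k, ‖Dq βinv s0 (Dq β s0 Z) (u k)‖ ≤ CDz := by
    intro k
    rw [hZdef]
    rw [DDq_conj z (hne k) (hpt k)]
    simpa using hCDz k
  -- summability of difference sequences
  have hsd : Summable fun k => |u k - u (k + 1)| :=
    summable_diff hmono hbij hs0I hfix hsign hxI
  have hsd' : Summable fun k => |u k - βinv (u k)| := by
    apply (summable_nat_add_iff 1).mp
    apply hsd.congr
    intro k
    have : βinv (u (k + 1)) = u k := by rw [husucc k, hlinv k]
    rw [this, abs_sub_comm]
  -- the two series
  set F1 : ℕ → ℂ := fun k => ((β^[k] x - β^[k + 1] x : ℝ) : ℂ) *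
    ((fun t => ellBeta β βinv s0 r y t * conj (z t)) (β^[k] x)) with hF1
  set F2 : ℕ → ℂ := fun k => ((β^[k] x - β^[k + 1] x : ℝ) : ℂ) *
    ((fun t => y t * conj (ellBeta β βinv s0 r z t)) (β^[k] x)) with hF2
  have hF1e : ∀ k, F1 k = ((u k - β (u k) : ℝ) : ℂ) *
      (ellBeta β βinv s0 r y (u k) * Z (u k)) := by
    intro k
    rw [hF1]
    simp only [← husucc k]
    rfl
  have hF2e : ∀ k, F2 k = ((u k - β (u k) : ℝ) : ℂ) *
      (ellBeta β βinv s0 r Z (u k) * y (u k)) := by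
    intro k
    rw [hF2]
    simp only [← husucc k]
    show _ * (y (u k) * conj (ellBeta β βinv s0 r z (u k))) = _
    rw [conj_ellBeta r z (hne k) (hpt k)]
    ring
  -- summability
  have hnn : ∀ w : ℂ, ‖w‖ = ‖w‖ := fun _ => rfl
  have hCDy0 : 0 ≤ CDy := le_trans (norm_nonneg _) (hCDy 0)
  have hCDz0 : 0 ≤ CDz := le_trans (norm_nonneg _) (hCDz 0)
  have hCy0 : 0 ≤ Cy := le_trans (norm_nonneg _) (hCy 0)
  have hCz0 : 0 ≤ Cz := le_trans (norm_nonneg _) (hCz 0)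
  have hR0 : 0 ≤ R := le_trans (norm_nonneg _) (hRn 0)
  have SA1 : Summable fun k => ((u k - βinv (u k) : ℝ) : ℂ) *
      Dq βinv s0 (Dq β s0 y) (u k) * Z (u k) := by
    apply Summable.of_norm
    apply Summable.of_nonneg_of_le (fun k => norm_nonneg _) _ (hsd'.mul_right (CDy * Cz))
    intro k
    rw [norm_mul, norm_mul, Complex.norm_real, Real.norm_eq_abs, mul_assoc]
    gcongr
    · exact hCDy k
    · exact hZn k
  have SA2 : Summable fun k => ((u k - βinv (u k) : ℝ) : ℂ) *
      Dq βinv s0 (Dq β s0 Z) (u k) * y (u k) := by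
    apply Summable.of_norm
    apply Summable.of_nonneg_of_le (fun k => norm_nonneg _) _ (hsd'.mul_right (CDz * Cy))
    intro k
    rw [norm_mul, norm_mul, Complex.norm_real, Real.norm_eq_abs, mul_assoc]
    gcongr
    · exact hCDZ k
    · exact hCy k
  have SB1 : Summable fun k => ((u k - β (u k) : ℝ) : ℂ) * r (u k) * (y (u k) * Z (u k)) := by
    apply Summable.of_norm
    apply Summable.of_nonneg_of_le (fun k => norm_nonneg _) _ (hsd.mul_right (R * (Cy * Cz)))
    intro k
    rw [norm_mul, norm_mul, norm_mul, Complex.norm_real, Complex.norm_real, Real.norm_eq_abs,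
      mul_assoc]
    have : |u k - β (u k)| = |u k - u (k + 1)| := by rw [husucc k]
    rw [this]
    gcongr
    · exact hRn k
    · exact hCy k
    · exact hZn k
  have SB2 : Summable fun k => ((u k - β (u k) : ℝ) : ℂ) * r (u k) * (Z (u k) * y (u k)) := by
    apply SB1.congr
    intro k
    ring
  have S1 : Summable F1 := by
    apply (SA1.add SB1).congr
    intro k
    rw [hF1e k]
    exact (term_decomp r y Z (hne k) (hβne k) (hlinv k)).symm
  have S2 : Summable F2 := by
    apply (SA2.add SB2).congr
    intro k
    rw [hF2e k]
    exact (term_decomp r Z y (hne k) (hβne k) (hlinv k)).symm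
  -- telescoping identity
  have hdiff : ∀ k, F1 k - F2 k = W (u k) - W (u (k + 1)) := by
    intro k
    rw [hF1e k, hF2e k, husucc k, hWdef]
    rw [← key_identity r y Z (hne k) (hbt k) (hpt k) (hβne k) (hpne k) (hlinv k) (hrinv k)]
    ring
  -- limit of W along the orbit
  have hZc : ContinuousAt Z s0 := Complex.continuous_conj.continuousAt.comp hzc
  have hDZeq : Dq β s0 Z = fun t => conj (Dq β s0 z t) :=
    funext fun t => Dq_conj β z hzd t
  have hDZc : ContinuousAt (Dq β s0 Z) s0 := by
    rw [hDZeq]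
    exact Complex.continuous_conj.continuousAt.comp hDzd.continuousAt
  have hDyc : ContinuousAt (Dq β s0 y) s0 := hDyd.continuousAt
  have hWs0 : W s0 = y s0 * Dq β s0 Z s0 - Z s0 * Dq β s0 y s0 := by
    rw [hWdef, wronk]
    simp [Dq]
  have hWlim : Tendsto (fun k => W (u k)) atTop (𝓝 (W s0)) := by
    rw [← Filter.tendsto_add_atTop_iff_nat 1]
    have e : ∀ k, W (u (k + 1)) =
        y (u (k + 1)) * Dq β s0 Z (u k) - Z (u (k + 1)) * Dq β s0 y (u k) := by
      intro k
      rw [hWdef, wronk, husucc k, Dq_binv_beta Z (hne k) (hbt k) (hlinv k),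
        Dq_binv_beta y (hne k) (hbt k) (hlinv k)]
    have hu_t1 : Tendsto (fun k => u (k + 1)) atTop (𝓝 s0) :=
      hu_t.comp (tendsto_add_atTop_nat 1)
    rw [funext e, hWs0]
    exact ((hyc.tendsto.comp hu_t1).mul (hDZc.tendsto.comp hu_t)).sub
      ((hZc.tendsto.comp hu_t1).mul (hDyc.tendsto.comp hu_t))
  -- conclude
  have S12 : Summable fun k => F1 k - F2 k := S1.sub S2
  have hpartial : ∀ n, ∑ i ∈ Finset.range n, (F1 i - F2 i) = W x - W (u n) := by
    intro n
    rw [Finset.sum_congr rfl fun i _ => hdiff i, Finset.sum_range_sub' (fun i => W (u i)) n]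
    simp [hudef]
  have hteles : Tendsto (fun n => ∑ i ∈ Finset.range n, (F1 i - F2 i)) atTop
      (𝓝 (W x - W s0)) := by
    rw [funext hpartial]
    exact tendsto_const_nhds.sub hWlim
  have : ∑' k, (F1 k - F2 k) = W x - W s0 :=
    tendsto_nhds_unique S12.hasSum.tendsto_sum_nat hteles
  rw [S1.tsum_sub S2] at this
  exact this

end End

theorem stmt_11
    (I : Set ℝ) (hIconn : I.OrdConnected)
    (β βinv : ℝ → ℝ) (s0 : ℝ)
    (hmono : StrictMonoOn β I) (hcont : ContinuousOn β I)
    (hbij : Set.BijOn β I I) (hinv : Set.InvOn βinv β I I)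
    (hs0I : s0 ∈ I) (hfix : β s0 = s0)
    (hsign : ∀ t ∈ I, (t - s0) * (β t - t) ≤ 0)
    (huniq : ∀ t ∈ I, (t - s0) * (β t - t) = 0 → t = s0)
    (a b : ℝ) (ha : a ∈ I) (hb : b ∈ I) (has0 : a ≤ s0) (hs0b : s0 ≤ b)
    (r : ℝ → ℝ) (hr : ContinuousOn r (Set.Icc a b))
    (a1 a2 b1 b2 : ℝ) (ha12 : |a1| + |a2| ≠ 0) (hb12 : |b1| + |b2| ≠ 0) (y z : ℝ → ℂ)
    (hyL2a : Summable fun j : ℕ => (β^[j] a - β^[j + 1] a) * ‖y (β^[j] a)‖ ^ 2)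
    (hyL2b : Summable fun j : ℕ => (β^[j] b - β^[j + 1] b) * ‖y (β^[j] b)‖ ^ 2)
    (hzL2a : Summable fun j : ℕ => (β^[j] a - β^[j + 1] a) * ‖z (β^[j] a)‖ ^ 2)
    (hzL2b : Summable fun j : ℕ => (β^[j] b - β^[j + 1] b) * ‖z (β^[j] b)‖ ^ 2)
    (hyc : ContinuousAt y s0) (hzc : ContinuousAt z s0)
    (hyd : DifferentiableAt ℝ y s0) (hzd : DifferentiableAt ℝ z s0)
    (hDyd : DifferentiableAt ℝ (Dq β s0 y) s0) (hDzd : DifferentiableAt ℝ (Dq β s0 z) s0)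
    (hDyb : ∃ C, ∀ t ∈ insert s0 (Set.range (fun j : ℕ => β^[j] a) ∪ Set.range (fun j : ℕ => β^[j] b)), ‖Dq β s0 y t‖ ≤ C)
    (hDzb : ∃ C, ∀ t ∈ insert s0 (Set.range (fun j : ℕ => β^[j] a) ∪ Set.range (fun j : ℕ => β^[j] b)), ‖Dq β s0 z t‖ ≤ C)
    (hDDyb : ∃ C, ∀ t ∈ insert s0 (Set.range (fun j : ℕ => β^[j] a) ∪ Set.range (fun j : ℕ => β^[j] b)), ‖Dq βinv s0 (Dq β s0 y) t‖ ≤ C)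
    (hDDzb : ∃ C, ∀ t ∈ insert s0 (Set.range (fun j : ℕ => β^[j] a) ∪ Set.range (fun j : ℕ => β^[j] b)), ‖Dq βinv s0 (Dq β s0 z) t‖ ≤ C)
    (hybc1 : (a1 : ℂ) * y a + (a2 : ℂ) * Dq βinv s0 y a = 0)
    (hybc2 : (b1 : ℂ) * y b + (b2 : ℂ) * Dq βinv s0 y b = 0)
    (hzbc1 : (a1 : ℂ) * z a + (a2 : ℂ) * Dq βinv s0 z a = 0)
    (hzbc2 : (b1 : ℂ) * z b + (b2 : ℂ) * Dq βinv s0 z b = 0) :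
    betaIntAB β a b (fun t => ellBeta β βinv s0 r y t * conj (z t)) =
      betaIntAB β a b (fun t => y t * conj (ellBeta β βinv s0 r z t)) := by
  have hZbc1 : (a1 : ℂ) * conj (z a) + (a2 : ℂ) * Dq βinv s0 (fun s => conj (z s)) a = 0 := by
    rw [Dq_conj βinv z hzd a]
    have h := congrArg conj hzbc1
    simpa only [map_add, map_mul, Complex.conj_ofReal, map_zero] using h
  have hZbc2 : (b1 : ℂ) * conj (z b) + (b2 : ℂ) * Dq βinv s0 (fun s => conj (z s)) b = 0 := by
    rw [Dq_conj βinv z hzd b]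
    have h := congrArg conj hzbc2
    simpa only [map_add, map_mul, Complex.conj_ofReal, map_zero] using h
  have hc1 : ¬ (a1 = 0 ∧ a2 = 0) := by
    rintro ⟨rfl, rfl⟩
    simp at ha12
  have hc2 : ¬ (b1 = 0 ∧ b2 = 0) := by
    rintro ⟨rfl, rfl⟩
    simp at hb12
  have hWa : wronk βinv s0 y (fun s => conj (z s)) a = 0 :=
    wronk_eq_zero y _ a1 a2 hc1 hybc1 hZbc1
  have hWb : wronk βinv s0 y (fun s => conj (z s)) b = 0 :=
    wronk_eq_zero y _ b1 b2 hc2 hybc2 hZbc2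
  obtain ⟨CY, hCY⟩ := hDDyb
  obtain ⟨CZ, hCZ⟩ := hDDzb
  have hCya : ∀ k : ℕ, ‖Dq βinv s0 (Dq β s0 y) (β^[k] a)‖ ≤ CY := fun k =>
    hCY _ (Set.mem_insert_of_mem _ (Set.mem_union_left _ ⟨k, rfl⟩))
  have hCyb : ∀ k : ℕ, ‖Dq βinv s0 (Dq β s0 y) (β^[k] b)‖ ≤ CY := fun k =>
    hCY _ (Set.mem_insert_of_mem _ (Set.mem_union_right _ ⟨k, rfl⟩))
  have hCza : ∀ k : ℕ, ‖Dq βinv s0 (Dq β s0 z) (β^[k] a)‖ ≤ CZ := fun k =>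
    hCZ _ (Set.mem_insert_of_mem _ (Set.mem_union_left _ ⟨k, rfl⟩))
  have hCzb : ∀ k : ℕ, ‖Dq βinv s0 (Dq β s0 z) (β^[k] b)‖ ≤ CZ := fun k =>
    hCZ _ (Set.mem_insert_of_mem _ (Set.mem_union_right _ ⟨k, rfl⟩))
  have hEa := endpoint hIconn hmono hcont hbij hinv hs0I hfix hsign huniq a b has0 hs0b
    r hr y z hyc hzc hyd hzd hDyd hDzd a ha le_rfl (has0.trans hs0b) CY CZ hCya hCza
  have hEb := endpoint hIconn hmono hcont hbij hinv hs0I hfix hsign huniq a b has0 hs0b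
    r hr y z hyc hzc hyd hzd hDyd hDzd b hb (has0.trans hs0b) le_rfl CY CZ hCyb hCzb
  rw [betaIntAB, betaIntAB]
  linear_combination hEb - hEa + hWb - hWa
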